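/- arXiv:1908.06209 — 2 statements merged into one kernel-verified Lean document; each statement's English description precedes it below -/
import Mathlib

section
/- Ordering of majorizers: under the assumption l(x,z) ≤ D_E(x,z) for all x,z, and with E = E₁ + E₂ and E m-strongly convex, for any x* and minimizer x̂ of E: l(x*, x̂) ≤ D_E^0(x*, x̂) ≤ W_{E₁}(-z, x*) for any z ∈ ∂E₂(x*), and W_{E₁}(-z, x*) ≤ (1/(2m))‖q‖² for q = z' + z with z' ∈ ∂E₁(x*), whenever E₁ is m-strongly convex. -/
open RealInnerProductSpace

/-- Ordering of the parametric majorizers: loss ≤ Bregman surrogate ≤ partial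
surrogate ≤ gradient penalty. -/
theorem ordering_of_majorizers {n : ℕ}
    (l : EuclideanSpace ℝ (Fin n) → EuclideanSpace ℝ (Fin n) → ℝ)
    (E E₁ E₂ E₁star : EuclideanSpace ℝ (Fin n) → ℝ) (m : ℝ) (hm : 0 < m)
    (hE : ∀ z, E z = E₁ z + E₂ z)
    (hconv : ConvexOn ℝ Set.univ E)
    (h₁conj : ∀ p, IsLUB (Set.range fun w => ⟪p, w⟫ - E₁ w) (E₁star p))
    -- standing assumption: `l(x,z) ≤ D_E(x,z)` for any subgradient of `E` at `z`
    (hl : ∀ x z p : EuclideanSpace ℝ (Fin n),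
      (∀ w, E z + ⟪p, w - z⟫ ≤ E w) → l x z ≤ E x - E z - ⟪p, x - z⟫)
    -- `E₁` is `m`-strongly convex in the Bregman sense
    (h₁strong : ∀ x y p : EuclideanSpace ℝ (Fin n),
      (∀ w, E₁ y + ⟪p, w - y⟫ ≤ E₁ w) →
      m / 2 * ‖x - y‖ ^ 2 ≤ E₁ x - E₁ y - ⟪p, x - y⟫)
    (xstar xhat z z' : EuclideanSpace ℝ (Fin n))
    (hmin : ∀ w, E xhat ≤ E w)
    (hz : ∀ w, E₂ xstar + ⟪z, w - xstar⟫ ≤ E₂ w)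
    (hz' : ∀ w, E₁ xstar + ⟪z', w - xstar⟫ ≤ E₁ w) :
    l xstar xhat ≤ E xstar - E xhat ∧
    E xstar - E xhat ≤ E₁star (-z) + E₁ xstar - ⟪-z, xstar⟫ ∧
    E₁star (-z) + E₁ xstar - ⟪-z, xstar⟫ ≤ 1 / (2 * m) * ‖z' + z‖ ^ 2 := by
  refine ⟨?_, ?_, ?_⟩
  · have h0 : ∀ w, E xhat + ⟪(0 : EuclideanSpace ℝ (Fin n)), w - xhat⟫ ≤ E w := by
      intro w; simpa using hmin w
    have := hl xstar xhat 0 h0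
    simpa using this
  · have hmem : ⟪-z, xhat⟫ - E₁ xhat ≤ E₁star (-z) :=
      (h₁conj (-z)).1 ⟨xhat, rfl⟩
    have h2 := hz xhat
    have hi : ⟪z, xhat - xstar⟫ = ⟪z, xhat⟫ - ⟪z, xstar⟫ := inner_sub_right z xhat xstar
    have hn1 : ⟪-z, xhat⟫ = -⟪z, xhat⟫ := inner_neg_left z xhat
    have hn2 : ⟪-z, xstar⟫ = -⟪z, xstar⟫ := inner_neg_left z xstar
    have hEx := hE xstar
    have hEh := hE xhat
    linarith
  · have key : E₁star (-z) ≤ 1 / (2 * m) * ‖z' + z‖ ^ 2 - E₁ xstar + ⟪-z, xstar⟫ := by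
      apply (h₁conj (-z)).2
      rintro b ⟨w, rfl⟩
      have hs := h₁strong w xstar z' hz'
      have hi1 : ⟪z', w - xstar⟫ = ⟪z', w⟫ - ⟪z', xstar⟫ := inner_sub_right z' w xstar
      have hn1 : ⟪-z, w⟫ = -⟪z, w⟫ := inner_neg_left z w
      have hn2 : ⟪-z, xstar⟫ = -⟪z, xstar⟫ := inner_neg_left z xstar
      have hq : ⟪z' + z, w - xstar⟫ = ⟪z', w⟫ - ⟪z', xstar⟫ + (⟪z, w⟫ - ⟪z, xstar⟫) := by
        rw [inner_add_left, inner_sub_right, inner_sub_right]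
      have habs : |⟪z' + z, w - xstar⟫| ≤ ‖z' + z‖ * ‖w - xstar‖ :=
        abs_real_inner_le_norm _ _
      have h1 : -(‖z' + z‖ * ‖w - xstar‖) ≤ ⟪z' + z, w - xstar⟫ :=
        neg_le_of_abs_le habs
      have hnn : (0:ℝ) ≤ ‖w - xstar‖ := norm_nonneg _
      have hamgm : ‖z' + z‖ * ‖w - xstar‖ ≤ m / 2 * ‖w - xstar‖ ^ 2 + 1 / (2 * m) * ‖z' + z‖ ^ 2 := by
        rw [← sub_nonneg]
        have heq : m / 2 * ‖w - xstar‖ ^ 2 + 1 / (2 * m) * ‖z' + z‖ ^ 2 -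
            ‖z' + z‖ * ‖w - xstar‖ = (m * ‖w - xstar‖ - ‖z' + z‖) ^ 2 / (2 * m) := by
          field_simp
          ring
        rw [heq]
        positivity
      simp only [hn1, hn2, hi1] at *
      nlinarith
    linarith
end

section
/- Descent property of iterative majorization: let θ^{k+1} minimize θ ↦ Σᵢ [l(xᵢ*, xᵢ(θᵏ)) + ⟨∇l(xᵢ*, xᵢ(θᵏ)), xᵢ(θ) - xᵢ(θᵏ)⟩ + D_{E_θ}^0(xᵢ(θᵏ), xᵢ(θ))], where xᵢ(θ) minimizes E(·, yᵢ, θ). If for all θ and all x,z, l(x, z') ≤ l(x,z) + ⟨∇l(x,z), z' - z⟩ + D_{E_θ}(z, z'), then Σᵢ l(xᵢ*, xᵢ(θ^{k+1})) ≤ Σᵢ l(xᵢ*, xᵢ(θᵏ)). -/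
open RealInnerProductSpace

/-- Descent property of the iterative majorization scheme: if `θ^{k+1}`
minimizes the linearized surrogate built at `θᵏ`, then the bi-level loss does
not increase. -/
theorem iterative_majorization_descent {n N : ℕ} {Θ : Type*}
    (E : EuclideanSpace ℝ (Fin n) → Fin N → Θ → ℝ)
    (l : EuclideanSpace ℝ (Fin n) → EuclideanSpace ℝ (Fin n) → ℝ)
    (gradl : EuclideanSpace ℝ (Fin n) → EuclideanSpace ℝ (Fin n) →
      EuclideanSpace ℝ (Fin n))
    (xs : Fin N → EuclideanSpace ℝ (Fin n))
    (x : Θ → Fin N → EuclideanSpace ℝ (Fin n))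
    (hl0 : ∀ z, l z z = 0) (hlnonneg : ∀ z z', 0 ≤ l z z')
    -- `x θ i` minimizes `E (·) i θ`
    (hmin : ∀ θ i z, E (x θ i) i θ ≤ E z i θ)
    -- linearized majorization inequality
    (hmaj : ∀ (θ : Θ) (i : Fin N) (z : EuclideanSpace ℝ (Fin n)),
      l (xs i) (x θ i) ≤ l (xs i) z + ⟪gradl (xs i) z, x θ i - z⟫ +
        (E z i θ - E (x θ i) i θ))
    (θk θk1 : Θ)
    -- `θk1` minimizes the surrogate built at `θk`
    (hopt : ∀ θ : Θ,
      (∑ i, (l (xs i) (x θk i) +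
        ⟪gradl (xs i) (x θk i), x θk1 i - x θk i⟫ +
        (E (x θk i) i θk1 - E (x θk1 i) i θk1))) ≤
      (∑ i, (l (xs i) (x θk i) +
        ⟪gradl (xs i) (x θk i), x θ i - x θk i⟫ +
        (E (x θk i) i θ - E (x θ i) i θ)))) :
    (∑ i, l (xs i) (x θk1 i)) ≤ ∑ i, l (xs i) (x θk i) := by
  calc (∑ i, l (xs i) (x θk1 i))
      ≤ ∑ i, (l (xs i) (x θk i) +
          ⟪gradl (xs i) (x θk i), x θk1 i - x θk i⟫ +
          (E (x θk i) i θk1 - E (x θk1 i) i θk1)) :=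
        Finset.sum_le_sum fun i _ => hmaj θk1 i (x θk i)
    _ ≤ ∑ i, (l (xs i) (x θk i) +
          ⟪gradl (xs i) (x θk i), x θk i - x θk i⟫ +
          (E (x θk i) i θk - E (x θk i) i θk)) := hopt θk
    _ = ∑ i, l (xs i) (x θk i) := by simp
end
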